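/- arXiv:1902.10820 — 3 statements merged into one kernel-verified Lean document; each statement's English description precedes it below -/
import Mathlib

section
/- A graph morphism g from the standard m-cube to the standard n-cube preserves pointwise meets and pointwise joins (g (x ⊓ y) = g x ⊓ g y and g (x ⊔ y) = g x ⊔ g y for all vertices x, y) if and only if g is dimension-preserving. -/
/-- Edge relation of the standard n-cube. -/
def CubeE (n : ℕ) (x y : Fin n → Bool) : Prop :=
  x = y ∨ ∃ i : Fin n, x i = false ∧ y i = true ∧ ∀ j, j ≠ i → x j = y j

/-- Graph morphisms between directed graphs given by edge relations. -/
def IsGraphHom {V V' : Type*} (E : V → V → Prop) (E' : V' → V' → Prop) (g : V → V') : Prop :=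
  ∀ x y, E x y → E' (g x) (g y)

/-- The pair (x, y) is a non-loop edge flipping exactly coordinate i. -/
def Flips {n : ℕ} (x y : Fin n → Bool) (i : Fin n) : Prop :=
  x i ≠ y i ∧ ∀ j, j ≠ i → x j = y j

/-- A map between cube vertex sets is dimension-preserving. -/
def DimPres {m n : ℕ} (g : (Fin m → Bool) → (Fin n → Bool)) : Prop :=
  ∀ x₁ y₁ x₂ y₂ (i : Fin m), Flips x₁ y₁ i → Flips x₂ y₂ i →
    (g x₁ = g y₁ ∧ g x₂ = g y₂) ∨
    ∃ j : Fin n, Flips (g x₁) (g y₁) j ∧ Flips (g x₂) (g y₂) j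

/-- Preservation of pointwise meets. -/
def PresMeet {m n : ℕ} (g : (Fin m → Bool) → (Fin n → Bool)) : Prop :=
  ∀ x y, g (fun i => x i && y i) = fun i => g x i && g y i

/-- Preservation of pointwise joins. -/
def PresJoin {m n : ℕ} (g : (Fin m → Bool) → (Fin n → Bool)) : Prop :=
  ∀ x y, g (fun i => x i || y i) = fun i => g x i || g y i


lemma cube_ind {m : ℕ} (P : (Fin m → Bool) → Prop) (h0 : P (fun _ => false))
    (hs : ∀ x (i : Fin m), x i = false → P x → P (fun j => x j || decide (j = i))) :
    ∀ x, P x := by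
  suffices h : ∀ c (x : Fin m → Bool),
      (Finset.univ.filter (fun j => x j = true)).card ≤ c → P x by
    intro x; exact h _ x le_rfl
  intro c
  induction c with
  | zero =>
    intro x hx
    have hxe : x = fun _ => false := by
      funext j
      by_contra hj
      have hj' : x j = true := by revert hj; cases x j <;> simp
      have hmem : j ∈ Finset.univ.filter (fun j => x j = true) := by simp [hj']
      have := Finset.card_pos.mpr ⟨j, hmem⟩
      omega
    rw [hxe]; exact h0
  | succ c ih =>
    intro x hx
    by_cases hex : ∃ i, x i = true
    · obtain ⟨i, hi⟩ := hex
      set x' : Fin m → Bool := fun j => x j && !(decide (j = i)) with hx'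
      have hxi : x = fun j => x' j || decide (j = i) := by
        funext j
        by_cases hj : j = i <;> simp [hx', hj, hi]
      have hx'i : x' i = false := by simp [hx']
      have hcard : (Finset.univ.filter (fun j => x' j = true)).card ≤ c := by
        have hsub : Finset.univ.filter (fun j => x' j = true)
            ⊆ (Finset.univ.filter (fun j => x j = true)).erase i := by
          intro j hj
          simp only [Finset.mem_filter, Finset.mem_erase, Finset.mem_univ, true_and,
            hx', Bool.and_eq_true, Bool.not_eq_true', decide_eq_false_iff_not] at hj ⊢
          exact ⟨hj.2, hj.1⟩
        have h1 := Finset.card_le_card hsub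
        have hmemi : i ∈ Finset.univ.filter (fun j => x j = true) := by simp [hi]
        have h2 := Finset.card_erase_of_mem hmemi
        omega
      rw [hxi]; exact hs x' i hx'i (ih x' hcard)
    · push_neg at hex
      have hxe : x = fun _ => false := by
        funext j
        have := hex j
        revert this; cases x j <;> simp
      rw [hxe]; exact h0

lemma classify {m : ℕ} (f : (Fin m → Bool) → Bool)
    (hm : ∀ x y, f (fun i => x i && y i) = (f x && f y))
    (hj : ∀ x y, f (fun i => x i || y i) = (f x || f y)) :
    (∀ x y, f x = f y) ∨ ∃ i, ∀ x, f x = x i := by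
  by_cases hc : ∀ x y, f x = f y
  · exact Or.inl hc
  push_neg at hc
  obtain ⟨a, b, hab⟩ := hc
  -- get a true point and a false point
  obtain ⟨a, ha, b, hb⟩ : ∃ a, f a = true ∧ ∃ b, f b = false := by
    cases haa : f a <;> cases hbb : f b
    · exact absurd (haa.trans hbb.symm) hab
    · exact ⟨b, hbb, a, haa⟩
    · exact ⟨a, haa, b, hbb⟩
    · exact absurd (haa.trans hbb.symm) hab
  have fbot : f (fun _ => false) = false := by
    have h := hm (fun _ => false) b
    simp only [Bool.false_and] at h
    rw [h, hb, Bool.and_false]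
  -- existence of a coordinate with f (e i) = true
  have hex : ∃ i : Fin m, f (fun j => decide (j = i)) = true := by
    have key : ∀ x, f x = true → ∃ i : Fin m, f (fun j => decide (j = i)) = true := by
      refine cube_ind _ ?_ ?_
      · intro h; rw [fbot] at h; exact absurd h (by simp)
      · intro x i _ ih hx'
        have h := hj x (fun j => decide (j = i))
        rw [hx'] at h
        rcases Bool.or_eq_true_iff.mp h.symm with h1 | h1
        · exact ih h1
        · exact ⟨i, h1⟩
    exact key a ha
  obtain ⟨i, hi⟩ := hex
  refine Or.inr ⟨i, fun z => ?_⟩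
  cases hz : z i
  · -- z i = false : z ⊓ e i = ⊥
    have hbotz : (fun j => z j && decide (j = i)) = fun _ => false := by
      funext j
      by_cases hj' : j = i
      · subst hj'; simp [hz]
      · simp [hj']
    have h := hm z (fun j => decide (j = i))
    rw [hbotz, fbot, hi, Bool.and_true] at h
    exact h.symm
  · -- z i = true : z ⊔ e i = z
    have hzz : (fun j => z j || decide (j = i)) = z := by
      funext j
      by_cases hj' : j = i
      · subst hj'; simp [hz]
      · simp [hj']
    have h := hj z (fun j => decide (j = i))
    rw [hzz, hi, Bool.or_true] at h
    exact h

lemma forward {m n : ℕ} (g : (Fin m → Bool) → (Fin n → Bool))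
    (hg : IsGraphHom (CubeE m) (CubeE n) g)
    (hmeet : PresMeet g) (hjoin : PresJoin g) : DimPres g := by
  intro x₁ y₁ x₂ y₂ i h1 h2
  have hc : ∀ k : Fin n, (∀ x y, g x k = g y k) ∨ ∃ i', ∀ x, g x k = x i' := by
    intro k
    exact classify (fun x => g x k)
      (fun x y => congrFun (hmeet x y) k) (fun x y => congrFun (hjoin x y) k)
  -- key: for any i-flip, coordinate k of the image moves iff g reads coordinate i at k
  have key : ∀ (x y : Fin m → Bool), Flips x y i → ∀ k : Fin n,
      (g x k = g y k ↔ ¬ (∀ z, g z k = z i)) := by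
    intro x y hf k
    constructor
    · intro heq hD
      rw [hD x, hD y] at heq
      exact hf.1 heq
    · intro hD
      rcases hc k with hk | ⟨i', hi'⟩
      · exact hk x y
      · by_cases hii : i' = i
        · exact absurd (hii ▸ hi') hD
        · rw [hi' x, hi' y, hf.2 i' hii]
  by_cases hD : ∃ j : Fin n, ∀ z, g z j = z i
  · obtain ⟨j, hj⟩ := hD
    -- uniqueness of j via graph hom property on the edge ⊥ → e i
    have uniq : ∀ k : Fin n, (∀ z, g z k = z i) → k = j := by
      intro k hk
      by_contra hkj
      have hedge : CubeE m (fun _ => false) (fun l => decide (l = i)) :=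
        Or.inr ⟨i, rfl, by simp, fun l hl => by simp [hl]⟩
      have h := hg _ _ hedge
      have hbj : g (fun _ => false) j = false := by rw [hj]
      have hej : g (fun l => decide (l = i)) j = true := by rw [hj]; simp
      have hbk : g (fun _ => false) k = false := by rw [hk]
      have hek : g (fun l => decide (l = i)) k = true := by rw [hk]; simp
      rcases h with h | ⟨i₀, _, _, hrest⟩
      · rw [h, hej] at hbj; exact absurd hbj (by simp)
      · by_cases hji : j = i₀
        · have := hrest k (fun hh => hkj (hh.trans hji.symm))
          rw [hbk, hek] at this; exact absurd this (by simp)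
        · have := hrest j hji
          rw [hbj, hej] at this; exact absurd this (by simp)
    refine Or.inr ⟨j, ⟨?_, ?_⟩, ⟨?_, ?_⟩⟩
    · rw [hj x₁, hj y₁]; exact h1.1
    · intro k hk
      exact (key x₁ y₁ h1 k).mpr (fun hDk => hk (uniq k hDk))
    · rw [hj x₂, hj y₂]; exact h2.1
    · intro k hk
      exact (key x₂ y₂ h2 k).mpr (fun hDk => hk (uniq k hDk))
  · push_neg at hD
    refine Or.inl ⟨funext fun k => ?_, funext fun k => ?_⟩
    · exact (key x₁ y₁ h1 k).mpr (by simpa using hD k)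
    · exact (key x₂ y₂ h2 k).mpr (by simpa using hD k)

lemma backward {m n : ℕ} (g : (Fin m → Bool) → (Fin n → Bool))
    (hg : IsGraphHom (CubeE m) (CubeE n) g)
    (hd : DimPres g) : PresMeet g ∧ PresJoin g := by
  have hflip0 : ∀ i : Fin m, Flips (fun _ => false) (fun l => decide (l = i)) i := by
    intro i
    refine ⟨by simp, fun j hj => by simp [hj]⟩
  -- per-coordinate behavior
  have hsig : ∀ i : Fin m, ∃ o : Option (Fin n),
      o.elim (∀ x y, Flips x y i → g x = g y)
        (fun k => ∀ x, x i = false → g x k = false ∧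
          g (fun j => x j || decide (j = i)) = fun l => g x l || decide (l = k)) := by
    intro i
    by_cases hgi : g (fun _ => false) = g (fun l => decide (l = i))
    · refine ⟨none, fun x y hf => ?_⟩
      rcases hd x y _ _ i hf (hflip0 i) with ⟨h, _⟩ | ⟨j, _, hj0⟩
      · exact h
      · exact absurd (congrFun hgi j) hj0.1
    · rcases hd _ _ _ _ i (hflip0 i) (hflip0 i) with ⟨h, _⟩ | ⟨k, hk, _⟩
      · exact absurd h hgi
      refine ⟨some k, fun x hxi => ?_⟩
      set y : Fin m → Bool := fun j => x j || decide (j = i) with hy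
      have hfxy : Flips x y i := by
        refine ⟨by simp [hy, hxi], fun j hj => by simp [hy, hj]⟩
      have hfl : Flips (g x) (g y) k := by
        rcases hd x y _ _ i hfxy (hflip0 i) with ⟨_, h⟩ | ⟨j, hjx, hj0⟩
        · exact absurd h hgi
        · have hjk : j = k := by
            by_contra hjk
            exact hk.1 (hj0.2 k (fun hh => hjk hh.symm))
          exact hjk ▸ hjx
      have hedge : CubeE m x y :=
        Or.inr ⟨i, hxi, by simp [hy], fun j hj => by simp [hy, hj]⟩
      rcases hg x y hedge with h | ⟨i₀, hi₀1, hi₀2, hi₀3⟩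
      · exact absurd (congrFun h k) hfl.1
      · have hki : k = i₀ := by
          by_contra hki
          exact hfl.1 (hi₀3 k hki)
        subst hki
        refine ⟨hi₀1, funext fun l => ?_⟩
        by_cases hl : l = k
        · subst hl; simp [hi₀2, hi₀1]
        · simp [hfl.2 l hl, hl]
  choose σ hσ using hsig
  -- injectivity
  have hinj : ∀ i₁ i₂ k, σ i₁ = some k → σ i₂ = some k → i₁ = i₂ := by
    intro i₁ i₂ k h1 h2
    by_contra h12
    have hh1 := hσ i₁; rw [h1] at hh1; simp only [Option.elim] at hh1
    have hh2 := hσ i₂; rw [h2] at hh2; simp only [Option.elim] at hh2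
    obtain ⟨hb1, hb2⟩ := hh1 (fun _ => false) rfl
    have he1 : g (fun l => decide (l = i₁)) k = true := by
      simpa [hb1] using congrFun hb2 k
    obtain ⟨hb1', _⟩ := hh2 (fun l => decide (l = i₁)) (by simp [Ne.symm h12])
    rw [hb1'] at he1; exact absurd he1 (by simp)
  -- the formula for g
  have hP : ∀ x, g x = fun k => g (fun _ => false) k ||
      decide (∃ i, σ i = some k ∧ x i = true) := by
    refine cube_ind _ ?_ ?_
    · funext k
      simp
    · intro x i hxi ih
      show g (fun j => x j || decide (j = i)) = fun k => g (fun _ => false) k ||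
        decide (∃ i', σ i' = some k ∧ (x i' || decide (i' = i)) = true)
      cases hoi : σ i with
      | none =>
        have hh := hσ i; rw [hoi] at hh; simp only [Option.elim] at hh
        have hfxy : Flips x (fun j => x j || decide (j = i)) i := by
          refine ⟨by simp [hxi], fun j hj => by simp [hj]⟩
        rw [← hh x _ hfxy, ih]
        funext k
        show (g (fun _ => false) k || decide (∃ i', σ i' = some k ∧ x i' = true)) =
          (g (fun _ => false) k || decide (∃ i', σ i' = some k ∧ (x i' || decide (i' = i)) = true))
        congr 1
        rw [decide_eq_decide]
        constructor
        · rintro ⟨i', h1, h2⟩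
          exact ⟨i', h1, by simp [h2]⟩
        · rintro ⟨i', h1, h2⟩
          by_cases hii : i' = i
          · rw [hii, hoi] at h1; exact absurd h1 (by simp)
          · exact ⟨i', h1, by simpa [hii] using h2⟩
      | some k₀ =>
        have hh := hσ i; rw [hoi] at hh; simp only [Option.elim] at hh
        obtain ⟨_, h2⟩ := hh x hxi
        rw [h2, ih]
        funext k
        show ((g (fun _ => false) k || decide (∃ i', σ i' = some k ∧ x i' = true))
            || decide (k = k₀)) =
          (g (fun _ => false) k || decide (∃ i', σ i' = some k ∧ (x i' || decide (i' = i)) = true))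
        have hiff : (∃ i', σ i' = some k ∧ (x i' || decide (i' = i)) = true) ↔
            ((∃ i', σ i' = some k ∧ x i' = true) ∨ k = k₀) := by
          constructor
          · rintro ⟨i', h1, hx'⟩
            by_cases hii : i' = i
            · subst hii
              rw [hoi] at h1
              exact Or.inr (Option.some_injective _ h1).symm
            · simp only [hii, decide_false, Bool.or_false] at hx'
              exact Or.inl ⟨i', h1, hx'⟩
          · rintro (⟨i', h1, hx'⟩ | hkk)
            · exact ⟨i', h1, by simp [hx']⟩
            · exact ⟨i, by rw [hoi, hkk], by simp⟩
        rw [show (decide (∃ i', σ i' = some k ∧ (x i' || decide (i' = i)) = true)) =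
          ((decide (∃ i', σ i' = some k ∧ x i' = true)) || decide (k = k₀)) by
            rw [← Bool.decide_or, decide_eq_decide]; exact hiff]
        exact Bool.or_assoc _ _ _
  constructor
  · intro x y
    rw [hP (fun i => x i && y i), hP x, hP y]
    funext k
    show (g (fun _ => false) k || decide (∃ i, σ i = some k ∧ (x i && y i) = true)) =
      ((g (fun _ => false) k || decide (∃ i, σ i = some k ∧ x i = true))
        && (g (fun _ => false) k || decide (∃ i, σ i = some k ∧ y i = true)))
    rw [show (decide (∃ i, σ i = some k ∧ (x i && y i) = true)) =
        ((decide (∃ i, σ i = some k ∧ x i = true)) && decide (∃ i, σ i = some k ∧ y i = true)) by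
      rw [← Bool.decide_and, decide_eq_decide]
      constructor
      · rintro ⟨i, h1, h2⟩
        rw [Bool.and_eq_true] at h2
        exact ⟨⟨i, h1, h2.1⟩, ⟨i, h1, h2.2⟩⟩
      · rintro ⟨⟨i₁, h1, hx⟩, ⟨i₂, h2, hy⟩⟩
        have := hinj i₁ i₂ k h1 h2
        subst this
        exact ⟨i₁, h1, by simp [hx, hy]⟩]
    cases g (fun _ => false) k <;>
      simp only [Bool.false_or, Bool.true_or, Bool.true_and, Bool.and_true]
  · intro x y
    rw [hP (fun i => x i || y i), hP x, hP y]
    funext k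
    show (g (fun _ => false) k || decide (∃ i, σ i = some k ∧ (x i || y i) = true)) =
      ((g (fun _ => false) k || decide (∃ i, σ i = some k ∧ x i = true))
        || (g (fun _ => false) k || decide (∃ i, σ i = some k ∧ y i = true)))
    rw [show (decide (∃ i, σ i = some k ∧ (x i || y i) = true)) =
        ((decide (∃ i, σ i = some k ∧ x i = true)) || decide (∃ i, σ i = some k ∧ y i = true)) by
      rw [← Bool.decide_or, decide_eq_decide]
      constructor
      · rintro ⟨i, h1, h2⟩
        rw [Bool.or_eq_true] at h2
        rcases h2 with h2 | h2
        · exact Or.inl ⟨i, h1, h2⟩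
        · exact Or.inr ⟨i, h1, h2⟩
      · rintro (⟨i, h1, hx⟩ | ⟨i, h1, hx⟩)
        · exact ⟨i, h1, by simp [hx]⟩
        · exact ⟨i, h1, by simp [hx]⟩]
    cases g (fun _ => false) k <;>
      simp only [Bool.false_or, Bool.true_or, Bool.or_self]

theorem stmt3 (m n : ℕ) (g : (Fin m → Bool) → (Fin n → Bool))
    (hg : IsGraphHom (CubeE m) (CubeE n) g) :
    (PresMeet g ∧ PresJoin g) ↔ DimPres g := by
  exact ⟨fun h => forward g hg h.1 h.2, fun h => backward g hg h⟩
end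

section
/- For every natural number n, there exists exactly one Hamiltonian path through the twisted n-cube; that is, there is exactly one bijection p : Fin (2^n) → (Fin n → Bool) such that T_n (p k) (p (k+1)) holds for every k with k + 1 < 2^n. -/
/-- Edge relation of the twisted n-cube. -/
def TwE (n : ℕ) (x y : Fin n → Bool) : Prop :=
  x = y ∨ ∃ i : Fin n, (∀ j, j ≠ i → x j = y j) ∧ y i = !(x i) ∧
    (x i = true ↔ Odd (Finset.univ.filter (fun j : Fin n => j < i ∧ x j = false)).card)

/-- count of zeros among coordinates with index < m -/
def zc (n : ℕ) (x : Fin n → Bool) (m : ℕ) : ℕ :=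
  (Finset.univ.filter (fun j : Fin n => (j : ℕ) < m ∧ x j = false)).card

/-- big-endian binary value of the first m bits -/
def phiAux (b : ℕ → Bool) : ℕ → ℕ
  | 0 => 0
  | m + 1 => 2 * phiAux b m + (b m).toNat

lemma zc_congr {n : ℕ} {x y : Fin n → Bool} {m : ℕ}
    (h : ∀ j : Fin n, (j : ℕ) < m → x j = y j) : zc n x m = zc n y m := by
  unfold zc
  congr 1
  apply Finset.filter_congr
  intro j _
  by_cases hj : (j : ℕ) < m
  · simp [hj, h j hj]
  · simp [hj]

lemma zc_succ {n : ℕ} (x : Fin n → Bool) {m : ℕ} (h : m < n) :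
    zc n x (m + 1) = zc n x m + (if x ⟨m, h⟩ = false then 1 else 0) := by
  unfold zc
  have hset : (Finset.univ.filter (fun j : Fin n => (j : ℕ) < m + 1 ∧ x j = false))
      = (Finset.univ.filter (fun j : Fin n => (j : ℕ) < m ∧ x j = false)) ∪
        (Finset.univ.filter (fun j : Fin n => (j : ℕ) = m ∧ x j = false)) := by
    rw [← Finset.filter_or]
    apply Finset.filter_congr
    intro j _
    constructor
    · rintro ⟨h1, h2⟩
      rcases Nat.lt_succ_iff_lt_or_eq.mp h1 with h' | h'
      · exact Or.inl ⟨h', h2⟩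
      · exact Or.inr ⟨h', h2⟩
    · rintro (⟨h1, h2⟩ | ⟨h1, h2⟩)
      · exact ⟨Nat.lt_succ_of_lt h1, h2⟩
      · exact ⟨by omega, h2⟩
  rw [hset, Finset.card_union_of_disjoint]
  · congr 1
    by_cases hx : x ⟨m, h⟩ = false
    · have : (Finset.univ.filter (fun j : Fin n => (j : ℕ) = m ∧ x j = false))
          = {(⟨m, h⟩ : Fin n)} := by
        ext j
        simp only [Finset.mem_filter, Finset.mem_univ, true_and, Finset.mem_singleton]
        constructor
        · rintro ⟨h1, _⟩; exact Fin.ext h1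
        · rintro rfl; exact ⟨rfl, hx⟩
      rw [this]
      simp [hx]
    · have : (Finset.univ.filter (fun j : Fin n => (j : ℕ) = m ∧ x j = false))
          = ∅ := by
        ext j
        simp only [Finset.mem_filter, Finset.mem_univ, true_and, Finset.notMem_empty,
          iff_false, not_and]
        rintro rfl
        intro hc
        exact hx (by convert hc)
      rw [this]
      simp [hx]
  · rw [Finset.disjoint_filter]
    rintro j _ ⟨h1, _⟩ ⟨h2, _⟩
    omega

lemma phiAux_lt (b : ℕ → Bool) (m : ℕ) : phiAux b m < 2 ^ m := by
  induction m with
  | zero => simp [phiAux]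
  | succ m ih =>
    simp only [phiAux, pow_succ]
    cases b m <;> simp [Bool.toNat] <;> omega

lemma phiAux_all_true {b : ℕ → Bool} {m : ℕ} (h : ∀ j < m, b j = true) :
    phiAux b m = 2 ^ m - 1 := by
  induction m with
  | zero => simp [phiAux]
  | succ m ih =>
    have h1 : phiAux b m = 2 ^ m - 1 := ih (fun j hj => h j (Nat.lt_succ_of_lt hj))
    simp only [phiAux, h1, h m (Nat.lt_succ_self m), Bool.toNat_true]
    have : 1 ≤ 2 ^ m := Nat.one_le_two_pow
    rw [pow_succ]; omega


lemma phiAux_congr {b b' : ℕ → Bool} {m : ℕ} (h : ∀ j < m, b j = b' j) :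
    phiAux b m = phiAux b' m := by
  induction m with
  | zero => rfl
  | succ m ih =>
    simp only [phiAux, ih (fun j hj => h j (Nat.lt_succ_of_lt hj)),
      h m (Nat.lt_succ_self m)]

lemma phiAux_lt_of_bits {b b' : ℕ → Bool} {i : ℕ}
    (heq : ∀ j < i, b j = b' j) (hb : b i = false) (hb' : b' i = true) :
    ∀ m, i < m → phiAux b m < phiAux b' m := by
  intro m him
  induction m with
  | zero => omega
  | succ m ih =>
    rcases Nat.lt_succ_iff_lt_or_eq.mp him with h' | h'
    · have := ih h'
      simp only [phiAux]
      have hc : (b m).toNat ≤ 1 := Bool.toNat_le _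
      omega
    · subst h'
      have he := phiAux_congr heq
      simp only [phiAux, he, hb, hb', Bool.toNat_false, Bool.toNat_true]
      omega

lemma phiAux_succ_of_bits {b b' : ℕ → Bool} {i : ℕ}
    (heq : ∀ j < i, b j = b' j) (hb : b i = false) (hb' : b' i = true)
    (habove : ∀ j, i < j → b j = true ∧ b' j = false) :
    ∀ m, i < m → phiAux b' m = phiAux b m + 1 := by
  intro m him
  induction m with
  | zero => omega
  | succ m ih =>
    rcases Nat.lt_succ_iff_lt_or_eq.mp him with h' | h'
    · have := ih h'
      obtain ⟨h1, h2⟩ := habove m h'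
      simp only [phiAux, this, h1, h2]
      simp [Bool.toNat]
      ring
    · subst h'
      have he := phiAux_congr heq
      simp only [phiAux, he, hb, hb', Bool.toNat_false, Bool.toNat_true]

lemma phiAux_inj {b b' : ℕ → Bool} {m : ℕ} (h : phiAux b m = phiAux b' m) :
    ∀ j < m, b j = b' j := by
  induction m with
  | zero => omega
  | succ m ih =>
    simp only [phiAux] at h
    have hbm : b m = b' m := by
      cases hx : b m <;> cases hy : b' m <;> simp [hx, hy, Bool.toNat] at h ⊢ <;> omega
    have hrec : phiAux b m = phiAux b' m := by
      rw [hbm] at h; omega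
    intro j hj
    rcases Nat.lt_succ_iff_lt_or_eq.mp hj with h' | h'
    · exact ih hrec j h'
    · subst h'; exact hbm

/-- j-th binary digit (big-endian): parity of zeros among the first j+1 coords. -/
def eb (n : ℕ) (x : Fin n → Bool) (j : ℕ) : Bool := decide (Even (zc n x (j + 1)))

def Phi (n : ℕ) (x : Fin n → Bool) : ℕ := phiAux (eb n x) n

lemma Phi_lt (n : ℕ) (x : Fin n → Bool) : Phi n x < 2 ^ n := phiAux_lt _ _

lemma zc_eq_card {n : ℕ} (x : Fin n → Bool) (i : Fin n) :
    (Finset.univ.filter (fun j : Fin n => j < i ∧ x j = false)).card = zc n x (i : ℕ) := by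
  unfold zc
  congr 1

lemma eb_congr {n : ℕ} {x y : Fin n → Bool} {j : ℕ}
    (h : ∀ j' : Fin n, (j' : ℕ) < j + 1 → x j' = y j') : eb n x j = eb n y j := by
  unfold eb
  rw [zc_congr h]

/-- Flipping coordinate i flips the parity of zc at every level m > i. -/
lemma zc_flip {n : ℕ} (x : Fin n → Bool) (i0 : Fin n) :
    ∀ m, (i0 : ℕ) < m → m ≤ n →
      (Even (zc n (Function.update x i0 (!x i0)) m) ↔ ¬ Even (zc n x m)) := by
  set y := Function.update x i0 (!x i0) with hy
  intro m him hmn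
  induction m with
  | zero => omega
  | succ m ih =>
    have hmn' : m < n := hmn
    rcases Nat.lt_succ_iff_lt_or_eq.mp him with h' | h'
    · have hup : y ⟨m, hmn'⟩ = x ⟨m, hmn'⟩ := by
        rw [hy]
        apply Function.update_of_ne
        intro hc
        have := congrArg Fin.val hc
        simp at this
        omega
      rw [zc_succ x hmn', zc_succ y hmn', hup]
      have := ih h' (le_of_lt hmn')
      by_cases hx : x ⟨m, hmn'⟩ = false <;>
        simp [hx, Nat.even_add_one, this] <;> tauto
    · have hi0 : i0 = ⟨m, hmn'⟩ := by apply Fin.ext; simp; omega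
      have hyx : zc n y m = zc n x m := by
        apply zc_congr
        intro j' hj'
        rw [hy]
        apply Function.update_of_ne
        intro hc
        have := congrArg Fin.val hc
        rw [hi0] at this
        simp at this
        omega
      have hupd : y ⟨m, hmn'⟩ = !x ⟨m, hmn'⟩ := by
        rw [hy, hi0]; exact Function.update_self _ _ _
      rw [zc_succ x hmn', zc_succ y hmn', hyx, hupd]
      cases hx : x ⟨m, hmn'⟩ <;> simp [hx, Nat.even_add_one] <;> tauto

lemma Phi_inj {n : ℕ} {x y : Fin n → Bool} (h : Phi n x = Phi n y) : x = y := by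
  have hbits : ∀ j < n, eb n x j = eb n y j := phiAux_inj h
  have key : ∀ k, (hk : k < n) → x ⟨k, hk⟩ = y ⟨k, hk⟩ := by
    intro k
    induction k using Nat.strong_induction_on with
    | _ k ih =>
      intro hk
      have hlow : ∀ j' : Fin n, (j' : ℕ) < k → x j' = y j' := by
        intro j' hj'
        have := ih j' hj' j'.isLt
        convert this using 2 <;> exact (Fin.ext rfl)
      have hzc : zc n x k = zc n y k := zc_congr hlow
      have hbk := hbits k hk
      rw [eb, eb, zc_succ x hk, zc_succ y hk, hzc] at hbk
      cases hx : x ⟨k, hk⟩ <;> cases hyv : y ⟨k, hk⟩ <;>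
        simp [hx, hyv, Nat.even_add_one, Nat.even_iff, Nat.odd_iff] at hbk ⊢ <;> omega
  funext j
  have := key j j.isLt
  convert this using 2 <;> exact (Fin.ext rfl)

/-- Non-loop edges strictly increase Phi. -/
lemma Phi_lt_of_edge {n : ℕ} {x y : Fin n → Bool} (hxy : TwE n x y) (hne : x ≠ y) :
    Phi n x < Phi n y := by
  rcases hxy with rfl | ⟨i, hoff, hflip, hcond⟩
  · exact absurd rfl hne
  rw [zc_eq_card] at hcond
  apply phiAux_lt_of_bits (i := (i : ℕ)) _ _ _ n i.isLt
  · intro j hj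
    apply eb_congr
    intro j' hj'
    apply hoff
    intro hc
    rw [hc] at hj'
    omega
  · -- eb n x i = false
    rw [eb, decide_eq_false_iff_not, zc_succ x i.isLt, Nat.even_add]
    have hi : (⟨(i : ℕ), i.isLt⟩ : Fin n) = i := Fin.ext rfl
    rw [hi]
    cases hx : x i <;>
      simp [hx, Nat.even_add_one, Nat.even_iff, Nat.odd_iff] at hcond ⊢ <;> omega
  · -- eb n y i = true
    rw [eb, decide_eq_true_iff, zc_succ y i.isLt]
    have hi : (⟨(i : ℕ), i.isLt⟩ : Fin n) = i := Fin.ext rfl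
    rw [hi]
    have hzc : zc n y (i : ℕ) = zc n x (i : ℕ) := by
      apply zc_congr
      intro j' hj'
      apply (hoff j' _).symm
      intro hc
      rw [hc] at hj'
      simp at hj'
    rw [hzc, hflip]
    cases hx : x i <;>
      simp [hx, Nat.even_add_one, Nat.even_iff, Nat.odd_iff] at hcond ⊢ <;> omega

/-- From any vertex that is not the last one, there is an edge to the vertex of next rank. -/
lemma succ_edge {n : ℕ} (x : Fin n → Bool) (h : Phi n x + 1 < 2 ^ n) :
    ∃ y : Fin n → Bool, TwE n x y ∧ Phi n y = Phi n x + 1 := by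
  -- there is a false digit
  have hex : ∃ j, j < n ∧ eb n x j = false := by
    by_contra hc
    push_neg at hc
    have : Phi n x = 2 ^ n - 1 := phiAux_all_true (fun j hj => by
      cases hb : eb n x j
      · exact absurd hb (hc j hj)
      · rfl)
    omega
  set S := (Finset.range n).filter (fun j => eb n x j = false) with hS
  have hSne : S.Nonempty := by
    obtain ⟨j, hj1, hj2⟩ := hex
    exact ⟨j, by simp [hS, hj1, hj2]⟩
  set i := S.max' hSne with hi
  have hiS : i ∈ S := S.max'_mem hSne
  have hin : i < n := by
    have := hiS; rw [hS] at this; simp at this; exact this.1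
  have hieb : eb n x i = false := by
    have := hiS; rw [hS] at this; simp at this; exact this.2
  have hmax : ∀ j, i < j → j < n → eb n x j = true := by
    intro j hij hjn
    by_contra hc
    have hjS : j ∈ S := by
      simp [hS, hjn]
      exact Bool.eq_false_iff.mpr hc ▸ (by cases hb : eb n x j; rfl; exact absurd hb hc)
    have := S.le_max' j hjS
    omega
  set i0 : Fin n := ⟨i, hin⟩ with hi0
  set y := Function.update x i0 (!x i0) with hy
  have hoff : ∀ j, j ≠ i0 → x j = y j := by
    intro j hj
    rw [hy]
    exact (Function.update_of_ne hj _ _).symm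
  have hflip : y i0 = !x i0 := by rw [hy]; exact Function.update_self _ _ _
  have hzsucc := zc_succ x hin
  have hieb' : ¬ Even (zc n x (i + 1)) := by
    rw [eb] at hieb
    simpa using hieb
  have hi0e : (⟨i, hin⟩ : Fin n) = i0 := rfl
  have hcond : x i0 = true ↔ Odd (zc n x i) := by
    rw [hi0e] at hzsucc
    cases hx : x i0 <;>
      simp [hx, Nat.even_iff, Nat.odd_iff] at hzsucc hieb' ⊢ <;> omega
  have hTwE : TwE n x y := by
    right
    exact ⟨i0, hoff, hflip, by rw [zc_eq_card]; exact hcond⟩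
  refine ⟨y, hTwE, ?_⟩
  -- padded digit sequences
  set b : ℕ → Bool := fun j => if j < n then eb n x j else true with hb
  set b' : ℕ → Bool := fun j => if j < n then eb n y j else false with hb'
  have hebflip : ∀ m, i < m → m ≤ n → (Even (zc n y m) ↔ ¬ Even (zc n x m)) := by
    intro m h1 h2
    exact zc_flip x i0 m h1 h2
  have h1 : phiAux b' n = phiAux b n + 1 := by
    apply phiAux_succ_of_bits (i := i) _ _ _ (fun j hj => ⟨?_, ?_⟩) n hin
    · intro j hj
      have hjn : j < n := lt_trans hj hin
      simp only [hb, hb', if_pos hjn]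
      apply eb_congr
      intro j' hj'
      apply hoff
      intro hc
      have := congrArg Fin.val hc
      rw [hi0] at this
      simp at this
      omega
    · simp only [hb, if_pos hin]; exact hieb
    · simp only [hb', if_pos hin, eb]
      rw [decide_eq_true_iff]
      rw [hebflip (i + 1) (Nat.lt_succ_self i) hin]
      exact hieb'
    · -- b j = true for j > i
      by_cases hjn : j < n
      · simp only [hb, if_pos hjn]; exact hmax j hj hjn
      · simp only [hb, if_neg hjn]
    · -- b' j = false for j > i
      by_cases hjn : j < n
      · simp only [hb', if_pos hjn, eb]
        rw [decide_eq_false_iff_not]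
        rw [hebflip (j + 1) (Nat.lt_succ_of_lt hj) hjn]
        have := hmax j hj hjn
        rw [eb, decide_eq_true_iff] at this
        simp [this]
      · simp only [hb', if_neg hjn]
  have h2 : phiAux b n = Phi n x := phiAux_congr (fun j hj => by simp only [hb]; rw [if_pos hj])
  have h3 : phiAux b' n = Phi n y := phiAux_congr (fun j hj => by simp only [hb']; rw [if_pos hj])
  rw [← h2, ← h3, h1]

theorem stmt7 (n : ℕ) :
    ∃! p : Fin (2 ^ n) → (Fin n → Bool),
      Function.Bijective p ∧
      ∀ k : ℕ, (h : k + 1 < 2 ^ n) →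
        TwE n (p ⟨k, Nat.lt_of_succ_lt h⟩) (p ⟨k + 1, h⟩) := by
  have hcard : Fintype.card (Fin n → Bool) = Fintype.card (Fin (2 ^ n)) := by simp
  have hΦbij : Function.Bijective (fun x : Fin n → Bool => (⟨Phi n x, Phi_lt n x⟩ : Fin (2 ^ n))) :=
    (Fintype.bijective_iff_injective_and_card _).mpr
      ⟨fun a b hab => Phi_inj (congrArg Fin.val hab), hcard⟩
  set E := Equiv.ofBijective _ hΦbij with hE
  refine ⟨fun k => E.symm k, ⟨E.symm.bijective, ?_⟩, ?_⟩
  · -- edges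
    intro k h
    have hPhix : Phi n (E.symm ⟨k, Nat.lt_of_succ_lt h⟩) = k := by
      have := E.apply_symm_apply ⟨k, Nat.lt_of_succ_lt h⟩
      exact congrArg Fin.val this
    obtain ⟨y, hTwE, hPhiy⟩ := succ_edge (E.symm ⟨k, Nat.lt_of_succ_lt h⟩)
      (by rw [hPhix]; exact h)
    have hEy : E y = ⟨k + 1, h⟩ := by
      apply Fin.ext
      show Phi n y = k + 1
      rw [hPhiy, hPhix]
    have hsy : E.symm ⟨k + 1, h⟩ = y := by rw [← hEy, Equiv.symm_apply_apply]
    show TwE n (E.symm ⟨k, Nat.lt_of_succ_lt h⟩) (E.symm ⟨k + 1, h⟩)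
    rw [hsy]
    exact hTwE
  · -- uniqueness
    rintro q ⟨hqbij, hqedge⟩
    have hstrict : ∀ k : ℕ, (h : k + 1 < 2 ^ n) →
        Phi n (q ⟨k, Nat.lt_of_succ_lt h⟩) < Phi n (q ⟨k + 1, h⟩) := by
      intro k h
      apply Phi_lt_of_edge (hqedge k h)
      intro he
      have := hqbij.1 he
      have := congrArg Fin.val this
      simp at this
    have hlower : ∀ k : ℕ, (hk : k < 2 ^ n) → k ≤ Phi n (q ⟨k, hk⟩) := by
      intro k
      induction k with
      | zero => intro hk; exact Nat.zero_le _
      | succ k ih =>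
        intro hk
        have h1 := ih (Nat.lt_of_succ_lt hk)
        have h2 := hstrict k hk
        omega
    have hadd : ∀ d k : ℕ, (h : k + d < 2 ^ n) →
        Phi n (q ⟨k, by omega⟩) + d ≤ Phi n (q ⟨k + d, h⟩) := by
      intro d
      induction d with
      | zero => intro k h; simp
      | succ d ih =>
        intro k h
        have h1 := ih k (by omega)
        have h2 := hstrict (k + d) h
        show Phi n (q ⟨k, by omega⟩) + (d + 1) ≤ Phi n (q ⟨k + d + 1, h⟩)
        omega
    have hupper : ∀ k : ℕ, (hk : k < 2 ^ n) → Phi n (q ⟨k, hk⟩) ≤ k := by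
      intro k hk
      have hpow : 1 ≤ 2 ^ n := Nat.one_le_two_pow
      have h1 := hadd (2 ^ n - 1 - k) k (by omega)
      have h2 := Phi_lt n (q ⟨k + (2 ^ n - 1 - k), by omega⟩)
      omega
    funext k
    have hq : Phi n (q k) = (k : ℕ) := by
      have h1 := hlower (k : ℕ) k.isLt
      have h2 := hupper (k : ℕ) k.isLt
      have he : (⟨(k : ℕ), k.isLt⟩ : Fin (2 ^ n)) = k := Fin.ext rfl
      rw [he] at h1 h2
      omega
    have hp : Phi n (E.symm k) = (k : ℕ) := by
      have := E.apply_symm_apply k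
      exact congrArg Fin.val this
    exact Phi_inj (hq.trans hp.symm)
end

section
/- Let m ≥ n be natural numbers. The map g : (Fin m → Bool) → (Fin n → Bool) defined by restricting to the first n coordinates, g x = x ∘ Fin.castLE h (where h : n ≤ m), is a surjective dimension-preserving graph morphism from the twisted m-cube to the twisted n-cube, and it is the unique one: every surjective dimension-preserving graph morphism from the twisted m-cube to the twisted n-cube equals g. -/
def flipc {k : ℕ} (c : Fin k) (x : Fin k → Bool) : Fin k → Bool := Function.update x c (!(x c))

def cnt {k : ℕ} (a : Fin k) (x : Fin k → Bool) : ℕ :=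
  (Finset.univ.filter (fun j : Fin k => j < a ∧ x j = false)).card

lemma flipc_same {k : ℕ} (c : Fin k) (x : Fin k → Bool) : flipc c x c = !(x c) :=
  Function.update_self c _ x

lemma flipc_ne {k : ℕ} {c j : Fin k} (x : Fin k → Bool) (h : j ≠ c) : flipc c x j = x j :=
  Function.update_of_ne h _ x

lemma flipc_flipc {k : ℕ} (c : Fin k) (x : Fin k → Bool) : flipc c (flipc c x) = x := by
  funext j
  by_cases hj : j = c
  · subst hj; rw [flipc_same, flipc_same, Bool.not_not]
  · rw [flipc_ne _ hj, flipc_ne _ hj]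

lemma cnt_flipc_of_not_lt {k : ℕ} {c a : Fin k} (x : Fin k → Bool) (h : ¬ c < a) :
    cnt a (flipc c x) = cnt a x := by
  unfold cnt
  congr 1
  apply Finset.filter_congr
  intro j _
  by_cases hj : j = c
  · subst hj; simp [h]
  · rw [flipc_ne x hj]

lemma cnt_flipc_of_lt {k : ℕ} {c a : Fin k} (x : Fin k → Bool) (h : c < a) :
    Odd (cnt a (flipc c x)) ↔ ¬ Odd (cnt a x) := by
  classical
  unfold cnt
  have hrest : ∀ j : Fin k, j ≠ c → ((j < a ∧ flipc c x j = false) ↔ (j < a ∧ x j = false)) := by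
    intro j hj; rw [flipc_ne x hj]
  cases hxc : x c with
  | false =>
    have hmem : c ∈ Finset.univ.filter (fun j : Fin k => j < a ∧ x j = false) := by
      simp [h, hxc]
    have hset : Finset.univ.filter (fun j : Fin k => j < a ∧ flipc c x j = false)
        = (Finset.univ.filter (fun j : Fin k => j < a ∧ x j = false)).erase c := by
      ext j
      by_cases hj : j = c
      · subst hj; simp [flipc_same, hxc]
      · simp [hj, hrest j hj]
    rw [hset]
    have hce := Finset.card_erase_add_one hmem
    rw [← hce, Nat.odd_add_one]
    tauto
  | true =>
    have hmem : c ∉ Finset.univ.filter (fun j : Fin k => j < a ∧ x j = false) := by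
      simp [hxc]
    have hset : Finset.univ.filter (fun j : Fin k => j < a ∧ flipc c x j = false)
        = insert c (Finset.univ.filter (fun j : Fin k => j < a ∧ x j = false)) := by
      ext j
      by_cases hj : j = c
      · subst hj; simp [flipc_same, hxc, h]
      · simp [hj, hrest j hj]
    rw [hset, Finset.card_insert_of_notMem hmem, Nat.odd_add_one]

lemma edge_of {k : ℕ} {a : Fin k} {x : Fin k → Bool} (hx : x a = true ↔ Odd (cnt a x)) :
    TwE k x (flipc a x) :=
  Or.inr ⟨a, fun j hj => (flipc_ne x hj).symm, flipc_same a x, hx⟩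

lemma flips_self {k : ℕ} (c : Fin k) (x : Fin k → Bool) : Flips x (flipc c x) c :=
  ⟨by rw [flipc_same]; cases x c <;> simp, fun j hj => (flipc_ne x hj).symm⟩

lemma flips_unique {k : ℕ} {u v : Fin k → Bool} {j j' : Fin k}
    (h1 : Flips u v j) (h2 : Flips u v j') : j = j' := by
  by_contra hne
  exact h1.1 (h2.2 j hne)

lemma flips_eq {k : ℕ} {u v : Fin k → Bool} {j : Fin k} (hf : Flips u v j) : v = flipc j u := by
  funext i
  by_cases hi : i = j
  · subst hi
    rw [flipc_same]
    have := hf.1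
    cases hu : u i <;> cases hv : v i <;> simp_all
  · rw [flipc_ne _ hi, hf.2 i hi]

lemma edge_flips {n : ℕ} {u v : Fin n → Bool} {j : Fin n}
    (he : TwE n u v) (hf : Flips u v j) : (u j = true ↔ Odd (cnt j u)) := by
  rcases he with rfl | ⟨i, hji, hvi, hodd⟩
  · exact absurd rfl hf.1
  · have hij : i = j := by
      by_contra hij
      have h1 := hf.2 i hij
      rw [hvi] at h1
      simp at h1
    subst hij
    exact hodd

lemma cube_ind_s9 {k : ℕ} (P : (Fin k → Bool) → Prop) (h1 : P (fun _ => true))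
    (h2 : ∀ x c, P x → P (flipc c x)) : ∀ x, P x := by
  classical
  have key : ∀ N (x : Fin k → Bool), (Finset.univ.filter (fun i => x i = false)).card = N → P x := by
    intro N
    induction N with
    | zero =>
      intro x hx
      have hxt : x = fun _ => true := by
        funext i
        by_contra hxi
        have hfalse : x i = false := by cases hv : x i; rfl; exact absurd hv hxi
        have : i ∈ Finset.univ.filter (fun i => x i = false) := by simp [hfalse]
        rw [Finset.card_eq_zero] at hx
        simp [hx] at this
      rw [hxt]; exact h1
    | succ N ih =>
      intro x hx
      have hne : ∃ i, x i = false := by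
        by_contra hall
        push_neg at hall
        have : Finset.univ.filter (fun i => x i = false) = ∅ := by
          rw [Finset.filter_eq_empty_iff]; intro i _; exact hall i
        rw [this] at hx
        simp at hx
      obtain ⟨i, hi⟩ := hne
      have hxi : x = flipc i (flipc i x) := (flipc_flipc i x).symm
      rw [hxi]
      apply h2
      apply ih
      have hset : Finset.univ.filter (fun c => flipc i x c = false)
          = (Finset.univ.filter (fun c => x c = false)).erase i := by
        ext c
        by_cases hc : c = i
        · subst hc; simp [flipc_same, hi]
        · simp [flipc_ne x hc, hc]
      rw [hset, Finset.card_erase_of_mem (by simp [hi]), hx]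
      omega
  exact fun x => key _ x rfl

def Act {m n : ℕ} (g : (Fin m → Bool) → (Fin n → Bool)) (i : Fin m) (j : Fin n) : Prop :=
  ∀ x, Flips (g x) (g (flipc i x)) j

section Main

variable {m n : ℕ} {g : (Fin m → Bool) → (Fin n → Bool)}

lemma act_update {i : Fin m} {j : Fin n} (hij : Act g i j) (x : Fin m → Bool) :
    g (flipc i x) = flipc j (g x) :=
  flips_eq (hij x)

lemma act_unique {i : Fin m} {j j' : Fin n} (h1 : Act g i j) (h2 : Act g i j') : j = j' :=
  flips_unique (h1 (fun _ => true)) (h2 (fun _ => true))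

lemma dichotomy (hd : DimPres g) (i : Fin m) :
    (∀ x, g (flipc i x) = g x) ∨ ∃ j, Act g i j := by
  by_cases hall : ∀ x, g (flipc i x) = g x
  · exact Or.inl hall
  · push_neg at hall
    obtain ⟨x₀, hx₀⟩ := hall
    rcases hd x₀ (flipc i x₀) x₀ (flipc i x₀) i (flips_self i x₀) (flips_self i x₀) with
      ⟨h1, _⟩ | ⟨j, hj, _⟩
    · exact absurd h1.symm hx₀
    · refine Or.inr ⟨j, fun x => ?_⟩
      rcases hd x₀ (flipc i x₀) x (flipc i x) i (flips_self i x₀) (flips_self i x) with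
        ⟨h1, _⟩ | ⟨j', hj₀', hj'⟩
      · exact absurd h1.symm hx₀
      · rwa [flips_unique hj₀' hj] at hj'

lemma stepC (hg : IsGraphHom (TwE m) (TwE n) g) {i : Fin m} {j : Fin n} (hij : Act g i j)
    (x : Fin m → Bool) :
    ((x i = true ↔ Odd (cnt i x)) ↔ (g x j = true ↔ Odd (cnt j (g x)))) := by
  constructor
  · intro hx
    exact edge_flips (hg _ _ (edge_of hx)) (hij x)
  · intro hgx
    by_contra hx
    have hx' : (flipc i x) i = true ↔ Odd (cnt i (flipc i x)) := by
      rw [flipc_same, cnt_flipc_of_not_lt x (lt_irrefl i)]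
      cases hc : x i <;> simp_all
    have hedge := hg _ _ (edge_of hx')
    rw [flipc_flipc] at hedge
    have hf : Flips (g (flipc i x)) (g x) j :=
      ⟨Ne.symm (hij x).1, fun j' hj' => ((hij x).2 j' hj').symm⟩
    have h2 := edge_flips hedge hf
    rw [act_update hij x, flipc_same, cnt_flipc_of_not_lt _ (lt_irrefl j)] at h2
    cases hv : g x j <;> simp [hv] at hgx h2
    · exact absurd h2 (Nat.not_odd_iff_even.mpr hgx)
    · exact absurd hgx (Nat.not_odd_iff_even.mpr h2)

lemma toggle_le {k : ℕ} {c a : Fin k} (x : Fin k → Bool) (h : c ≤ a) :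
    (((flipc c x) a = true ↔ Odd (cnt a (flipc c x))) ↔ ¬(x a = true ↔ Odd (cnt a x))) := by
  rcases eq_or_lt_of_le h with rfl | hlt
  · rw [flipc_same, cnt_flipc_of_not_lt x (lt_irrefl c)]
    cases hc : x c <;> simp [hc] <;> tauto
  · rw [flipc_ne x (ne_of_gt hlt)]
    have h2 := cnt_flipc_of_lt x hlt
    tauto

lemma toggle_not_le {k : ℕ} {c a : Fin k} (x : Fin k → Bool) (h : ¬ c ≤ a) :
    (((flipc c x) a = true ↔ Odd (cnt a (flipc c x))) ↔ (x a = true ↔ Odd (cnt a x))) := by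
  have hne : a ≠ c := fun e => h (le_of_eq e.symm)
  rw [flipc_ne x hne, cnt_flipc_of_not_lt x (fun hlt => h hlt.le)]

lemma stepT (hg : IsGraphHom (TwE m) (TwE n) g) (hd : DimPres g)
    {a : Fin m} {j : Fin n} (ha : Act g a j) (c : Fin m) :
    (c ≤ a ↔ ∃ j', Act g c j' ∧ j' ≤ j) := by
  classical
  set t : Fin m → Bool := fun _ => true with ht
  have h1 := stepC hg ha t
  have h2 := stepC hg ha (flipc c t)
  rcases dichotomy hd c with hcol | ⟨j', hj'⟩
  · rw [hcol t] at h2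
    constructor
    · intro hca
      exfalso
      have hL := toggle_le (a := a) t hca
      tauto
    · rintro ⟨j'', hj'', _⟩
      exfalso
      exact (hj'' t).1 (by rw [hcol t])
  · rw [act_update hj' t] at h2
    by_cases hj'j : j' ≤ j
    · refine ⟨fun _ => ⟨j', hj', hj'j⟩, fun _ => ?_⟩
      by_contra hca
      have hL := toggle_not_le t hca
      have hR := toggle_le (g t) hj'j
      tauto
    · constructor
      · intro hca
        exfalso
        have hL := toggle_le t hca
        have hR := toggle_not_le (g t) hj'j
        tauto
      · rintro ⟨j'', hj'', hle⟩
        exact absurd ((act_unique hj'' hj') ▸ hle) hj'j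

end Main
section Main2

variable {m n : ℕ} {g : (Fin m → Bool) → (Fin n → Bool)}

lemma stepS (hd : DimPres g) (hs : Function.Surjective g) (j : Fin n) : ∃ i, Act g i j := by
  by_contra hno
  push_neg at hno
  have hconst : ∀ x, g x j = g (fun _ => true) j := by
    apply cube_ind_s9 (P := fun x => g x j = g (fun _ => true) j) rfl
    intro x c hx
    rcases dichotomy hd c with hcol | ⟨j', hj'⟩
    · rw [hcol x, hx]
    · have hne : j ≠ j' := fun e => hno c (e ▸ hj')
      rw [act_update hj' x, flipc_ne _ hne, hx]
  obtain ⟨x, hxe⟩ := hs (flipc j (g (fun _ => true)))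
  have hc := hconst x
  rw [hxe, flipc_same] at hc
  cases g (fun _ => true) j <;> simp_all

lemma act_inj (hg : IsGraphHom (TwE m) (TwE n) g) (hd : DimPres g)
    {c₁ c₂ : Fin m} {j' : Fin n} (h1 : Act g c₁ j') (h2 : Act g c₂ j') : c₁ = c₂ := by
  have l1 : c₂ ≤ c₁ := (stepT hg hd h1 c₂).mpr ⟨j', h2, le_refl _⟩
  have l2 : c₁ ≤ c₂ := (stepT hg hd h2 c₁).mpr ⟨j', h1, le_refl _⟩
  exact le_antisymm l2 l1

lemma stepI (h : n ≤ m) (hg : IsGraphHom (TwE m) (TwE n) g) (hd : DimPres g)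
    (hs : Function.Surjective g) (j : Fin n) : Act g (Fin.castLE h j) j := by
  classical
  obtain ⟨a, ha⟩ := stepS hd hs j
  have hT := stepT hg hd ha
  have hex : ∀ c ∈ Finset.Iic a, ∃ j', Act g c j' ∧ j' ≤ j :=
    fun c hc => (hT c).mp (Finset.mem_Iic.mp hc)
  have hcard : (Finset.Iic a).card = (Finset.Iic j).card := by
    apply Finset.card_bij (fun c hc => (hex c hc).choose)
    · intro c hc
      exact Finset.mem_Iic.mpr (hex c hc).choose_spec.2
    · intro c₁ h₁ c₂ h₂ heq
      exact act_inj hg hd (hex c₁ h₁).choose_spec.1 (heq ▸ (hex c₂ h₂).choose_spec.1)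
    · intro b hb
      obtain ⟨c, hc⟩ := stepS hd hs b
      have hca : c ∈ Finset.Iic a :=
        Finset.mem_Iic.mpr ((hT c).mpr ⟨b, hc, Finset.mem_Iic.mp hb⟩)
      exact ⟨c, hca, act_unique (hex c hca).choose_spec.1 hc⟩
  rw [Fin.card_Iic, Fin.card_Iic] at hcard
  have hav : a = Fin.castLE h j := by
    apply Fin.ext
    simpa using hcard
  rwa [hav] at ha

end Main2
section Main3

variable {m n : ℕ} {g : (Fin m → Bool) → (Fin n → Bool)}

lemma stepE (h : n ≤ m) (hg : IsGraphHom (TwE m) (TwE n) g) (hd : DimPres g)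
    (hs : Function.Surjective g) : ∀ j : Fin n, g (fun _ => true) j = true := by
  have key : ∀ N (j : Fin n), j.val = N → g (fun _ => true) j = true := by
    intro N
    induction N using Nat.strong_induction_on with
    | _ N ih =>
      intro j hj
      have hC := stepC hg (stepI h hg hd hs j) (fun _ => true)
      have hcntm : cnt (Fin.castLE h j) (fun _ : Fin m => true) = 0 := by
        rw [cnt, Finset.card_eq_zero, Finset.filter_eq_empty_iff]
        rintro j' - ⟨-, hfalse⟩
        exact Bool.noConfusion hfalse
      have hcntn : cnt j (g (fun _ => true)) = 0 := by
        rw [cnt, Finset.card_eq_zero, Finset.filter_eq_empty_iff]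
        rintro j' - ⟨hlt, hfalse⟩
        have hlt' : j'.val < N := by rw [← hj]; exact hlt
        have := ih j'.val hlt' j' rfl
        rw [this] at hfalse
        exact Bool.noConfusion hfalse
      rw [hcntm, hcntn] at hC
      simpa [Nat.odd_iff] using hC
  exact fun j => key j.val j rfl

lemma stepF (h : n ≤ m) (hg : IsGraphHom (TwE m) (TwE n) g) (hd : DimPres g)
    (hs : Function.Surjective g) : ∀ x (j : Fin n), g x j = x (Fin.castLE h j) := by
  apply cube_ind_s9 (P := fun x => ∀ j : Fin n, g x j = x (Fin.castLE h j))
  · exact fun j => stepE h hg hd hs j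
  · intro x c hx j
    rcases dichotomy hd c with hcol | ⟨j', hj'⟩
    · have hne : Fin.castLE h j ≠ c := by
        rintro rfl
        exact ((stepI h hg hd hs j) x).1 (by rw [hcol x])
      rw [hcol x, flipc_ne x hne]
      exact hx j
    · have hc : c = Fin.castLE h j' := act_inj hg hd hj' (stepI h hg hd hs j')
      rw [act_update hj' x]
      by_cases hjj : j = j'
      · subst hjj
        rw [flipc_same, hc, flipc_same, hx j]
      · have hne : Fin.castLE h j ≠ c := by
          rw [hc]
          intro e
          exact hjj (Fin.castLE_injective h e)
        rw [flipc_ne _ hjj, flipc_ne x hne]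
        exact hx j

end Main3
lemma cnt_cast {m n : ℕ} (h : n ≤ m) (i : Fin m) (hi : i.val < n) (x : Fin m → Bool) :
    cnt (⟨i.val, hi⟩ : Fin n) (x ∘ Fin.castLE h) = cnt i x := by
  unfold cnt
  apply Finset.card_nbij (fun j => Fin.castLE h j)
  · intro j hj
    simp only [Finset.coe_filter, Set.mem_setOf_eq, Finset.mem_filter, Finset.mem_univ, true_and, Fin.lt_def] at hj ⊢
    exact hj
  · exact fun a _ b _ e => Fin.castLE_injective h e
  · intro b hb
    simp only [Finset.coe_filter, Finset.mem_univ, true_and, Set.mem_setOf_eq, Fin.lt_def] at hb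
    refine ⟨⟨b.val, lt_trans hb.1 hi⟩, ?_, Fin.ext rfl⟩
    simp only [Finset.coe_filter, Finset.mem_univ, true_and, Set.mem_setOf_eq, Fin.lt_def,
      Function.comp_apply]
    refine ⟨hb.1, ?_⟩
    have hbe : Fin.castLE h (⟨b.val, lt_trans hb.1 hi⟩ : Fin n) = b := Fin.ext rfl
    rw [hbe]
    exact hb.2

lemma castLE_ne {m n : ℕ} (h : n ≤ m) {j : Fin n} {i : Fin m} (hi : i.val < n)
    (hj : j ≠ ⟨i.val, hi⟩) : Fin.castLE h j ≠ i := by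
  intro e
  apply hj
  apply Fin.ext
  have := congrArg Fin.val e
  simpa using this

lemma exist_hom {m n : ℕ} (h : n ≤ m) :
    IsGraphHom (TwE m) (TwE n) (fun x => x ∘ Fin.castLE h) := by
  intro x y hxy
  rcases hxy with rfl | ⟨i, hji, hiv, hodd⟩
  · exact Or.inl rfl
  · by_cases hi : i.val < n
    · have hci : Fin.castLE h (⟨i.val, hi⟩ : Fin n) = i := Fin.ext rfl
      refine Or.inr ⟨⟨i.val, hi⟩, ?_, ?_, ?_⟩
      · intro j hj
        exact hji (Fin.castLE h j) (castLE_ne h hi hj)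
      · show y (Fin.castLE h ⟨i.val, hi⟩) = !(x (Fin.castLE h ⟨i.val, hi⟩))
        rw [hci]; exact hiv
      · show x (Fin.castLE h ⟨i.val, hi⟩) = true ↔ Odd (cnt (⟨i.val, hi⟩ : Fin n) (x ∘ Fin.castLE h))
        rw [hci, cnt_cast h i hi x]
        exact hodd
    · refine Or.inl (funext fun j => ?_)
      apply hji
      intro e
      apply hi
      rw [← e]
      exact j.isLt
  
lemma exist_dim {m n : ℕ} (h : n ≤ m) : DimPres (fun x : Fin m → Bool => x ∘ Fin.castLE h) := by
  intro x₁ y₁ x₂ y₂ i f₁ f₂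
  by_cases hi : i.val < n
  · have hci : Fin.castLE h (⟨i.val, hi⟩ : Fin n) = i := Fin.ext rfl
    refine Or.inr ⟨⟨i.val, hi⟩, ⟨?_, ?_⟩, ⟨?_, ?_⟩⟩
    · show x₁ (Fin.castLE h ⟨i.val, hi⟩) ≠ y₁ (Fin.castLE h ⟨i.val, hi⟩)
      rw [hci]; exact f₁.1
    · intro j hj
      exact f₁.2 (Fin.castLE h j) (castLE_ne h hi hj)
    · show x₂ (Fin.castLE h ⟨i.val, hi⟩) ≠ y₂ (Fin.castLE h ⟨i.val, hi⟩)
      rw [hci]; exact f₂.1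
    · intro j hj
      exact f₂.2 (Fin.castLE h j) (castLE_ne h hi hj)
  · have hne : ∀ j : Fin n, Fin.castLE h j ≠ i := by
      intro j e
      apply hi; rw [← e]; exact j.isLt
    exact Or.inl ⟨funext fun j => f₁.2 _ (hne j), funext fun j => f₂.2 _ (hne j)⟩

lemma exist_surj {m n : ℕ} (h : n ≤ m) :
    Function.Surjective (fun x : Fin m → Bool => x ∘ Fin.castLE h) := by
  intro y
  refine ⟨fun i => if hi : i.val < n then y ⟨i.val, hi⟩ else true, ?_⟩
  funext j
  show (if hi : (Fin.castLE h j).val < n then y ⟨(Fin.castLE h j).val, hi⟩ else true) = y j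
  rw [dif_pos (show (Fin.castLE h j).val < n from j.isLt)]
  exact congrArg y (Fin.ext rfl)


theorem stmt9 (m n : ℕ) (h : n ≤ m) :
    (IsGraphHom (TwE m) (TwE n) (fun x => x ∘ Fin.castLE h) ∧
      DimPres (fun x => x ∘ Fin.castLE h) ∧
      Function.Surjective (fun x : Fin m → Bool => x ∘ Fin.castLE h)) ∧
    (∀ g : (Fin m → Bool) → (Fin n → Bool),
      IsGraphHom (TwE m) (TwE n) g → DimPres g → Function.Surjective g →
        g = fun x => x ∘ Fin.castLE h) := by
  refine ⟨⟨exist_hom h, exist_dim h, exist_surj h⟩, ?_⟩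
  intro g hg hd hs
  funext x j
  exact stepF h hg hd hs x j
end
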